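/- Let Ω ⊂ ℝⁿ be a bounded domain whose boundary ∂Ω is an m-set, with 0 < m ≤ n, and let d(x) = dist(x, ∂Ω). If −(n−m) < μ < (n−m)(p−1) for some 1 < p < ∞, then the weight w(x) = d(x)^μ belongs to the Muckenhaupt class A_p on ℝⁿ; that is, sup over balls B of (|B|⁻¹∫_B d^μ)(|B|⁻¹∫_B d^{−μ/(p−1)})^{p−1} is finite. -/

import Mathlib

open MeasureTheory

/-- `F` is an m-set with constant `C`. -/
def IsMSet {n : ℕ} (m : ℝ) (C : ℝ) (F : Set (EuclideanSpace ℝ (Fin n))) : Prop :=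
  0 < C ∧ ∀ x ∈ F, ∀ ρ : ℝ, 0 < ρ → ρ ≤ Metric.diam F →
    ENNReal.ofReal (C⁻¹ * ρ ^ m) < μH[m] (Metric.ball x ρ ∩ F) ∧
    μH[m] (Metric.ball x ρ ∩ F) < ENNReal.ofReal (C * ρ ^ m)

open Metric
open scoped ENNReal NNReal

namespace DistAp

variable {n : ℕ}

local notation "E" => EuclideanSpace ℝ (Fin n)

lemma measurable_nonneg_rpow {α : Type*} [MeasurableSpace α] {f : α → ℝ}
    (hf : Measurable f) (h0 : ∀ x, 0 ≤ f x) (γ : ℝ) :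
    Measurable fun x => f x ^ γ := by
  have : (fun x => f x ^ γ) =
      fun x => if f x = 0 then (0:ℝ) ^ γ else Real.exp (Real.log (f x) * γ) := by
    funext x
    by_cases h : f x = 0
    · simp [h]
    · rw [if_neg h, Real.rpow_def_of_pos (lt_of_le_of_ne (h0 x) (Ne.symm h))]
  rw [this]
  exact Measurable.ite (hf (measurableSet_singleton 0)) measurable_const
    (Real.measurable_exp.comp ((Real.measurable_log.comp hf).mul_const γ))

lemma measurable_infDist_rpow (F : Set E) (γ : ℝ) :
    Measurable fun y : E => infDist y F ^ γ :=
  measurable_nonneg_rpow (continuous_infDist_pt F).measurable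
    (fun _ => infDist_nonneg) γ

lemma mset_measure_lt_top {m C : ℝ} {F : Set E}
    (hFc : IsCompact F) (hD : 0 < diam F) (hF : IsMSet m C F) :
    μH[m] F < ⊤ := by
  obtain ⟨b', hb'F, hb'fin, hcover⟩ :=
    hFc.elim_finite_subcover_image (b := F) (c := fun z => ball z (diam F))
      (fun i _ => isOpen_ball)
      (fun z hz => Set.mem_biUnion hz (mem_ball_self hD))
  have hsub : F ⊆ ⋃ z ∈ hb'fin.toFinset, ball z (diam F) ∩ F := by
    intro y hy
    obtain ⟨z, hz, hyz⟩ := Set.mem_iUnion₂.1 (hcover hy)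
    exact Set.mem_biUnion (hb'fin.mem_toFinset.2 hz) ⟨hyz, hy⟩
  calc μH[m] F ≤ μH[m] (⋃ z ∈ hb'fin.toFinset, ball z (diam F) ∩ F) := measure_mono hsub
    _ ≤ ∑ z ∈ hb'fin.toFinset, μH[m] (ball z (diam F) ∩ F) :=
        measure_biUnion_finset_le _ _
    _ < ⊤ := by
        refine ENNReal.sum_lt_top.2 fun z hz => ?_
        exact lt_trans (hF.2 z (hb'F (hb'fin.mem_toFinset.1 hz)) (diam F) hD le_rfl).2
          ENNReal.ofReal_lt_top


/-- upper regularity constant -/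
noncomputable def C₂ (m C : ℝ) (F : Set (EuclideanSpace ℝ (Fin n))) : ℝ :=
  C * 3 ^ m + (μH[m] F).toReal * 3 ^ m / (diam F) ^ m

lemma C₂_nonneg {m C : ℝ} {F : Set E} (hC : 0 < C) (hm : 0 < m) : 0 ≤ C₂ m C F := by
  have h1 : (0:ℝ) ≤ C * 3 ^ m := by positivity
  have h2 : (0:ℝ) ≤ (μH[m] F).toReal * 3 ^ m / (diam F) ^ m := by positivity
  unfold C₂; linarith

lemma mset_upper {m C : ℝ} {F : Set E} (hm : 0 < m) (hHfin : μH[m] F < ⊤)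
    (hD : 0 < diam F) (hF : IsMSet m C F) (z : E) (R : ℝ) (hR : 0 < R) :
    μH[m] (F ∩ closedBall z R) ≤ ENNReal.ofReal (C₂ m C F * R ^ m) := by
  have hC := hF.1
  have hRm : (0:ℝ) ≤ R ^ m := Real.rpow_nonneg hR.le m
  rcases (F ∩ closedBall z R).eq_empty_or_nonempty with he | ⟨w, hwF, hwz⟩
  · rw [he]
    simp only [measure_empty]
    positivity
  · by_cases h3 : 3 * R ≤ diam F
    · have hsub : F ∩ closedBall z R ⊆ ball w (3 * R) ∩ F := by
        rintro y ⟨hyF, hyz⟩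
        refine ⟨?_, hyF⟩
        have h1 : dist y w ≤ dist y z + dist z w := dist_triangle y z w
        have h2 : dist y z ≤ R := mem_closedBall.1 hyz
        have h2' : dist z w ≤ R := by
          rw [dist_comm]; exact mem_closedBall.1 hwz
        have : dist y w < 3 * R := by linarith
        exact mem_ball.2 this
      calc μH[m] (F ∩ closedBall z R) ≤ μH[m] (ball w (3 * R) ∩ F) := measure_mono hsub
        _ ≤ ENNReal.ofReal (C * (3 * R) ^ m) :=
            (hF.2 w hwF (3 * R) (by linarith) h3).2.le
        _ ≤ ENNReal.ofReal (C₂ m C F * R ^ m) := by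
            apply ENNReal.ofReal_le_ofReal
            rw [Real.mul_rpow (by norm_num) hR.le]
            have h2 : (0:ℝ) ≤ (μH[m] F).toReal * 3 ^ m / (diam F) ^ m := by positivity
            unfold C₂; nlinarith
    · -- far case : use total measure
      have hq : (1:ℝ) ≤ (3 * R / diam F) ^ m := by
        have h1 : (1:ℝ) ≤ 3 * R / diam F := by
          rw [le_div_iff₀ hD]; linarith
        calc (1:ℝ) = 1 ^ m := (Real.one_rpow m).symm
          _ ≤ (3 * R / diam F) ^ m := Real.rpow_le_rpow zero_le_one h1 hm.le
      calc μH[m] (F ∩ closedBall z R) ≤ μH[m] F := measure_mono Set.inter_subset_left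
        _ = ENNReal.ofReal ((μH[m] F).toReal) := (ENNReal.ofReal_toReal hHfin.ne).symm
        _ ≤ ENNReal.ofReal (C₂ m C F * R ^ m) := by
            apply ENNReal.ofReal_le_ofReal
            have hH : (0:ℝ) ≤ (μH[m] F).toReal := ENNReal.toReal_nonneg
            have key : (μH[m] F).toReal ≤ (μH[m] F).toReal * (3 * R / diam F) ^ m := by
              nlinarith
            have e1 : (μH[m] F).toReal * (3 * R / diam F) ^ m
                = (μH[m] F).toReal * 3 ^ m / (diam F) ^ m * R ^ m := by
              rw [Real.div_rpow (by positivity) hD.le,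
                Real.mul_rpow (by norm_num) hR.le]
              ring
            have h1 : (0:ℝ) ≤ C * 3 ^ m := by positivity
            have hCRm : (0:ℝ) ≤ C * 3 ^ m * R ^ m := by positivity
            unfold C₂
            nlinarith [key, e1]
      

lemma vol_thickening {m C : ℝ} {F : Set E} (hm : 0 < m)
    (hFc : IsCompact F) (hFne : F.Nonempty) (hF : IsMSet m C F) :
    ∃ A : ℝ, 0 ≤ A ∧ ∀ (x : E) (r t : ℝ), 0 < t → t ≤ r →
      volume (ball x r ∩ {y | infDist y F ≤ t}) ≤
        ENNReal.ofReal (A * (r ^ m * t ^ ((n:ℝ) - m))) := by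
  classical
  have hC := hF.1
  set v' : ℝ := (volume (ball (0:E) 1)).toReal with hv'
  have hv'nn : 0 ≤ v' := ENNReal.toReal_nonneg
  set c2 := C₂ m C F with hc2
  have hc2nn : 0 ≤ c2 := C₂_nonneg hC hm
  refine ⟨C * c2 * 3 ^ m * 2 ^ m * 3 ^ (n:ℕ) * v' + 2 ^ (n:ℕ) * v', by positivity,
    fun x r t ht htr => ?_⟩
  have hr : 0 < r := lt_of_lt_of_le ht htr
  have hrm : (0:ℝ) ≤ r ^ m := Real.rpow_nonneg hr.le m
  have htτ : (0:ℝ) ≤ t ^ ((n:ℝ) - m) := Real.rpow_nonneg ht.le _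
  set G := ball x r ∩ {y | infDist y F ≤ t} with hG
  have hball01 : volume (ball (0:E) 1) = ENNReal.ofReal v' :=
    (ENNReal.ofReal_toReal measure_ball_lt_top.ne).symm
  have hvolcB : ∀ (b : E) (s : ℝ), 0 ≤ s →
      volume (closedBall b s) = ENNReal.ofReal (s ^ (n:ℕ) * v') := by
    intro b s hs
    rw [Measure.addHaar_closedBall volume b hs, hball01,
      ← ENNReal.ofReal_mul (by positivity), finrank_euclideanSpace_fin]
  by_cases hcase : t / 2 ≤ diam F
  · -- Vitali covering + counting
    have hD : 0 < diam F := lt_of_lt_of_le (by linarith) hcase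
    have hHfin := mset_measure_lt_top hFc hD hF
    obtain ⟨u, huT, hdisj, hcov⟩ :=
      Vitali.exists_disjoint_subfamily_covering_enlargement_closedBall
        (F ∩ closedBall x (r + t)) (id : E → E) (fun _ => t / 2) (t / 2)
        (fun a _ => le_rfl) 4 (by norm_num)
    -- counting bound
    have hcount : ∀ s : Finset E, ↑s ⊆ u →
        (s.card : ℝ) * (C⁻¹ * (t / 2) ^ m) ≤ c2 * (3 * r) ^ m := by
      intro s hs
      have hsF : ∀ b ∈ s, b ∈ F := fun b hb => (huT (hs hb)).1
      have hdisj' : (↑s : Set E).PairwiseDisjoint fun b => ball b (t / 2) ∩ F := by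
        refine Set.PairwiseDisjoint.mono (hdisj.subset hs) fun b => ?_
        exact (Set.inter_subset_left).trans ball_subset_closedBall
      have hmeas : ∀ b ∈ s, MeasurableSet (ball b (t / 2) ∩ F) :=
        fun b _ => isOpen_ball.measurableSet.inter hFc.isClosed.measurableSet
      have hsum : (s.card : ℝ≥0∞) * ENNReal.ofReal (C⁻¹ * (t / 2) ^ m) ≤
          μH[m] (F ∩ closedBall x (r + 2 * t)) := by
        calc (s.card : ℝ≥0∞) * ENNReal.ofReal (C⁻¹ * (t / 2) ^ m)
            = ∑ b ∈ s, ENNReal.ofReal (C⁻¹ * (t / 2) ^ m) := by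
              rw [Finset.sum_const, nsmul_eq_mul]
          _ ≤ ∑ b ∈ s, μH[m] (ball b (t / 2) ∩ F) := by
              refine Finset.sum_le_sum fun b hb => ?_
              exact (hF.2 b (hsF b hb) (t / 2) (by linarith) hcase).1.le
          _ = μH[m] (⋃ b ∈ s, ball b (t / 2) ∩ F) :=
              (measure_biUnion_finset hdisj' hmeas).symm
          _ ≤ μH[m] (F ∩ closedBall x (r + 2 * t)) := by
              refine measure_mono ?_
              refine Set.iUnion₂_subset fun b hb => ?_
              rintro y ⟨hy1, hy2⟩
              refine ⟨hy2, ?_⟩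
              have h1 : dist y b < t / 2 := mem_ball.1 hy1
              have h2 : dist b x ≤ r + t := mem_closedBall.1 (huT (hs hb)).2
              have := dist_triangle y b x
              exact mem_closedBall.2 (by linarith)
      have hup : μH[m] (F ∩ closedBall x (r + 2 * t)) ≤
          ENNReal.ofReal (c2 * (3 * r) ^ m) := by
        refine (mset_upper hm hHfin hD hF x (r + 2 * t) (by linarith)).trans ?_
        apply ENNReal.ofReal_le_ofReal
        have : (r + 2 * t) ^ m ≤ (3 * r) ^ m :=
          Real.rpow_le_rpow (by linarith) (by linarith) hm.le
        nlinarith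
      have := hsum.trans hup
      rw [← ENNReal.ofReal_natCast, ← ENNReal.ofReal_mul (Nat.cast_nonneg _)] at this
      exact (ENNReal.ofReal_le_ofReal_iff (by positivity)).1 this
    -- u is finite
    have ha : 0 < C⁻¹ * (t / 2) ^ m := by
      have := Real.rpow_pos_of_pos (by linarith : (0:ℝ) < t / 2) m
      positivity
    have hufin : u.Finite := by
      by_contra hinf
      obtain ⟨s, hsu, hcard⟩ := Set.Infinite.exists_subset_card_eq hinf
        (⌈c2 * (3 * r) ^ m / (C⁻¹ * (t / 2) ^ m)⌉₊ + 1)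
      have h1 := hcount s hsu
      rw [hcard] at h1
      have h2 : c2 * (3 * r) ^ m / (C⁻¹ * (t / 2) ^ m) ≤
          (⌈c2 * (3 * r) ^ m / (C⁻¹ * (t / 2) ^ m)⌉₊ : ℝ) := Nat.le_ceil _
      have h3 : ((⌈c2 * (3 * r) ^ m / (C⁻¹ * (t / 2) ^ m)⌉₊ + 1 : ℕ) : ℝ)
          ≤ c2 * (3 * r) ^ m / (C⁻¹ * (t / 2) ^ m) := by
        rw [le_div_iff₀ ha]; exact_mod_cast h1
      push_cast at h3
      linarith
    -- covering of G
    have hGsub : G ⊆ ⋃ b ∈ hufin.toFinset, closedBall b (3 * t) := by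
      rintro y ⟨hy1, hy2⟩
      obtain ⟨z, hzF, hz⟩ := hFc.exists_infDist_eq_dist hFne y
      have hdyz : dist y z ≤ t := by rw [← hz]; exact hy2
      have hzT : z ∈ F ∩ closedBall x (r + t) := by
        refine ⟨hzF, mem_closedBall.2 ?_⟩
        have h1 := dist_triangle z y x
        have h2 : dist y x < r := mem_ball.1 hy1
        have : dist z y ≤ t := by rw [dist_comm]; exact hdyz
        linarith
      obtain ⟨b, hbu, hsub⟩ := hcov z hzT
      have hzb : dist z b ≤ 4 * (t / 2) :=
        mem_closedBall.1 (hsub (mem_closedBall_self (by linarith)))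
      refine Set.mem_biUnion (hufin.mem_toFinset.2 hbu) ?_
      have := dist_triangle y z b
      exact mem_closedBall.2 (by linarith)
    -- final volume estimate
    have hcard := hcount hufin.toFinset (by simp)
    calc volume G ≤ volume (⋃ b ∈ hufin.toFinset, closedBall b (3 * t)) :=
          measure_mono hGsub
      _ ≤ ∑ b ∈ hufin.toFinset, volume (closedBall b (3 * t)) :=
          measure_biUnion_finset_le _ _
      _ = (hufin.toFinset.card : ℝ≥0∞) * ENNReal.ofReal ((3 * t) ^ (n:ℕ) * v') := by
          rw [Finset.sum_congr rfl fun b _ => hvolcB b (3 * t) (by linarith),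
            Finset.sum_const, nsmul_eq_mul]
      _ = ENNReal.ofReal ((hufin.toFinset.card : ℝ) * ((3 * t) ^ (n:ℕ) * v')) := by
          rw [← ENNReal.ofReal_natCast, ← ENNReal.ofReal_mul (Nat.cast_nonneg _)]
      _ ≤ ENNReal.ofReal ((C * c2 * 3 ^ m * 2 ^ m * 3 ^ (n:ℕ) * v' + 2 ^ (n:ℕ) * v')
            * (r ^ m * t ^ ((n:ℝ) - m))) := by
          apply ENNReal.ofReal_le_ofReal
          have hNb : (hufin.toFinset.card : ℝ) ≤
              c2 * (3 * r) ^ m / (C⁻¹ * (t / 2) ^ m) := by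
            rw [le_div_iff₀ ha]; exact hcard
          have h30 : (0:ℝ) ≤ (3 * t) ^ (n:ℕ) * v' := by positivity
          have key : c2 * (3 * r) ^ m / (C⁻¹ * (t / 2) ^ m) * ((3 * t) ^ (n:ℕ) * v')
              = C * c2 * 3 ^ m * 2 ^ m * 3 ^ (n:ℕ) * v' * (r ^ m * t ^ ((n:ℝ) - m)) := by
            rw [Real.mul_rpow (by norm_num) hr.le,
              Real.div_rpow ht.le (by norm_num : (0:ℝ) ≤ 2),
              Real.rpow_sub ht, Real.rpow_natCast, mul_pow]
            have htm : (0:ℝ) < t ^ m := Real.rpow_pos_of_pos ht m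
            have h2m : (0:ℝ) < (2:ℝ) ^ m := Real.rpow_pos_of_pos (by norm_num) m
            field_simp
          have h1 : (hufin.toFinset.card : ℝ) * ((3 * t) ^ (n:ℕ) * v')
              ≤ c2 * (3 * r) ^ m / (C⁻¹ * (t / 2) ^ m) * ((3 * t) ^ (n:ℕ) * v') := by
            exact mul_le_mul_of_nonneg_right hNb h30
          rw [key] at h1
          have h2 : (0:ℝ) ≤ 2 ^ (n:ℕ) * v' * (r ^ m * t ^ ((n:ℝ) - m)) := by positivity
          nlinarith [h1]
  · -- t/2 > diam F : F is small, single ball suffices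
    push_neg at hcase
    obtain ⟨z0, hz0⟩ := id hFne
    have hGsub : G ⊆ closedBall z0 (2 * t) := by
      rintro y ⟨hy1, hy2⟩
      obtain ⟨z, hzF, hz⟩ := hFc.exists_infDist_eq_dist hFne y
      have hdyz : dist y z ≤ t := by rw [← hz]; exact hy2
      have hzz0 : dist z z0 ≤ diam F := dist_le_diam_of_mem hFc.isBounded hzF hz0
      have := dist_triangle y z z0
      exact mem_closedBall.2 (by linarith)
    calc volume G ≤ volume (closedBall z0 (2 * t)) := measure_mono hGsub
      _ = ENNReal.ofReal ((2 * t) ^ (n:ℕ) * v') := hvolcB z0 (2 * t) (by linarith)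
      _ ≤ ENNReal.ofReal ((C * c2 * 3 ^ m * 2 ^ m * 3 ^ (n:ℕ) * v' + 2 ^ (n:ℕ) * v')
            * (r ^ m * t ^ ((n:ℝ) - m))) := by
          apply ENNReal.ofReal_le_ofReal
          have e1 : (2 * t) ^ (n:ℕ) * v' = 2 ^ (n:ℕ) * v' * (t ^ m * t ^ ((n:ℝ) - m)) := by
            rw [← Real.rpow_add ht, mul_pow, ← Real.rpow_natCast t n]
            ring_nf
          have htmrm : t ^ m ≤ r ^ m := Real.rpow_le_rpow ht.le htr hm.le
          have h2 : (0:ℝ) ≤ C * c2 * 3 ^ m * 2 ^ m * 3 ^ (n:ℕ) * v'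
              * (r ^ m * t ^ ((n:ℝ) - m)) := by positivity
          have h3 : (0:ℝ) ≤ 2 ^ (n:ℕ) * v' := by positivity
          have h4 : 2 ^ (n:ℕ) * v' * (t ^ m * t ^ ((n:ℝ) - m)) ≤
              2 ^ (n:ℕ) * v' * (r ^ m * t ^ ((n:ℝ) - m)) :=
            mul_le_mul_of_nonneg_left
              (mul_le_mul_of_nonneg_right htmrm htτ) h3
          nlinarith [e1, h4, h2]

lemma layered_bound {m : ℝ} {F : Set E} {γ : ℝ} (hγ0 : γ < 0)
    (hγl : -((n:ℝ) - m) < γ) {A : ℝ} (hA : 0 ≤ A)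
    (hvol : ∀ (x : E) (r t : ℝ), 0 < t → t ≤ r →
      volume (ball x r ∩ {y | infDist y F ≤ t}) ≤
        ENNReal.ofReal (A * (r ^ m * t ^ ((n:ℝ) - m)))) :
    ∃ B : ℝ, 0 ≤ B ∧ ∀ (x : E) (r : ℝ), 0 < r → infDist x F < 2 * r →
      ∫⁻ y in ball x r, ENNReal.ofReal (infDist y F ^ γ) ≤
        ENNReal.ofReal (B * r ^ (γ + (n:ℝ))) := by
  classical
  set τ : ℝ := (n:ℝ) - m with hτ
  set u : ℝ := (2:ℝ)⁻¹ with hu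
  have hu0 : (0:ℝ) < u := by norm_num
  have hu1 : u < 1 := by norm_num
  set q : ℝ := u ^ (γ + τ) with hq
  have hγτ : 0 < γ + τ := by simp only [hτ]; linarith
  have hq0 : 0 < q := Real.rpow_pos_of_pos hu0 _
  have hq1 : q < 1 := Real.rpow_lt_one hu0.le hu1 hγτ
  -- the constant
  set c0 : ℝ := A * 3 ^ m * ((3 * u) ^ γ * 3 ^ τ) with hc0
  have hc0nn : 0 ≤ c0 := by
    have := Real.rpow_nonneg (by norm_num : (0:ℝ) ≤ 3 * u) γ
    have := Real.rpow_nonneg (by norm_num : (0:ℝ) ≤ 3) m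
    have := Real.rpow_nonneg (by norm_num : (0:ℝ) ≤ 3) τ
    positivity
  have h1q : (0:ℝ) < 1 - q := by linarith
  refine ⟨c0 * (1 - q)⁻¹, by positivity, fun x r hr hx => ?_⟩
  set S : ℝ := 3 * r with hS
  have hS0 : 0 < S := by positivity
  -- layers
  set L : ℕ → Set E := fun k =>
    ball x r ∩ {y | S * u ^ (k + 1) < infDist y F ∧ infDist y F ≤ S * u ^ k} with hL
  set Z : Set E := ball x r ∩ {y | infDist y F ≤ 0} with hZ
  have hcover : ball x r ⊆ Z ∪ ⋃ k : ℕ, L k := by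
    intro y hy
    rcases le_or_gt (infDist y F) 0 with h0 | h0
    · exact Or.inl ⟨hy, h0⟩
    · refine Or.inr ?_
      have hdS : infDist y F < S := by
        have h1 : infDist y F ≤ infDist x F + dist y x := infDist_le_infDist_add_dist
        have h2 : dist y x < r := mem_ball.1 hy
        simp only [hS]; linarith
      have hex : ∃ k : ℕ, S * u ^ (k + 1) < infDist y F := by
        obtain ⟨k, hk⟩ := exists_pow_lt_of_lt_one (div_pos h0 hS0) hu1
        refine ⟨k, ?_⟩
        have h3 : u ^ (k + 1) ≤ u ^ k := pow_le_pow_of_le_one hu0.le hu1.le (by omega)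
        have h4 : S * u ^ k < infDist y F := by
          rw [lt_div_iff₀ hS0] at hk ; nlinarith [hk]
        nlinarith [h3, hS0]
      set k0 := Nat.find hex with hk0
      have hk0p := Nat.find_spec hex
      refine Set.mem_iUnion.2 ⟨k0, hy, hk0p, ?_⟩
      rcases Nat.eq_zero_or_pos k0 with h | h
      · rw [h]; simpa using hdS.le
      · have := Nat.find_min hex (m := k0 - 1) (by omega)
        push_neg at this
        have e : k0 - 1 + 1 = k0 := by omega
        rwa [e] at this
  -- bound on each layer integral
  have hlayer : ∀ k : ℕ, ∫⁻ y in L k, ENNReal.ofReal (infDist y F ^ γ) ≤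
      ENNReal.ofReal (c0 * r ^ (γ + (n:ℝ)) * q ^ k) := by
    intro k
    have hSuk1 : (0:ℝ) < S * u ^ (k + 1) := by positivity
    have hbound : ∫⁻ y in L k, ENNReal.ofReal (infDist y F ^ γ) ≤
        ENNReal.ofReal ((S * u ^ (k + 1)) ^ γ) * volume (L k) := by
      rw [← setLIntegral_const (L k) _]
      refine setLIntegral_mono measurable_const fun y hy => ?_
      refine ENNReal.ofReal_le_ofReal ?_
      exact Real.rpow_le_rpow_of_nonpos hSuk1 hy.2.1.le hγ0.le
    have hvolL : volume (L k) ≤ ENNReal.ofReal (A * ((3*r) ^ m * (S * u ^ k) ^ τ)) := by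
      have hsub : L k ⊆ ball x (3*r) ∩ {y | infDist y F ≤ S * u ^ k} := by
        rintro y ⟨hy1, hy2⟩
        exact ⟨ball_subset_ball (by linarith) hy1, hy2.2⟩
      refine (measure_mono hsub).trans ?_
      exact hvol x (3*r) (S * u ^ k) (by positivity)
        (by simp only [hS]
            nlinarith [pow_le_one₀ hu0.le hu1.le (n := k), hr,
              pow_pos hu0 k])
    calc ∫⁻ y in L k, ENNReal.ofReal (infDist y F ^ γ)
        ≤ ENNReal.ofReal ((S * u ^ (k + 1)) ^ γ) *
            ENNReal.ofReal (A * ((3*r) ^ m * (S * u ^ k) ^ τ)) := by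
          exact hbound.trans (mul_le_mul_right hvolL _)
      _ = ENNReal.ofReal ((S * u ^ (k + 1)) ^ γ * (A * ((3*r) ^ m * (S * u ^ k) ^ τ))) := by
          rw [← ENNReal.ofReal_mul (Real.rpow_nonneg hSuk1.le γ)]
      _ ≤ ENNReal.ofReal (c0 * r ^ (γ + (n:ℝ)) * q ^ k) := by
          apply ENNReal.ofReal_le_ofReal
          apply le_of_eq
          -- key algebraic identity
          have key : ∀ j : ℕ, (S * u ^ (j + 1)) ^ γ * (S * u ^ j) ^ τ =
              q ^ j * ((S * u) ^ γ * S ^ τ) := by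
            intro j
            induction j with
            | zero => simp
            | succ i ih =>
              have e1 : S * u ^ (i + 1 + 1) = u * (S * u ^ (i + 1)) := by ring
              have e2 : S * u ^ (i + 1) = u * (S * u ^ i) := by ring
              have hSui : (0:ℝ) ≤ S * u ^ (i + 1) := by positivity
              have hSui' : (0:ℝ) ≤ S * u ^ i := by positivity
              calc (S * u ^ (i + 1 + 1)) ^ γ * (S * u ^ (i + 1)) ^ τ
                  = (u * (S * u ^ (i + 1))) ^ γ * (u * (S * u ^ i)) ^ τ := by
                    rw [← e1, ← e2]
                _ = u ^ γ * (S * u ^ (i + 1)) ^ γ * (u ^ τ * (S * u ^ i) ^ τ) := by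
                    rw [Real.mul_rpow hu0.le hSui, Real.mul_rpow hu0.le hSui']
                _ = (u ^ γ * u ^ τ) * ((S * u ^ (i + 1)) ^ γ * (S * u ^ i) ^ τ) := by
                    ring
                _ = q * (q ^ i * ((S * u) ^ γ * S ^ τ)) := by
                    rw [ih, ← Real.rpow_add hu0, hq]
                _ = q ^ (i + 1) * ((S * u) ^ γ * S ^ τ) := by ring
          have e0 : (S * u ^ (k + 1)) ^ γ * (A * ((3*r) ^ m * (S * u ^ k) ^ τ)) =
              A * (3*r) ^ m * ((S * u ^ (k + 1)) ^ γ * (S * u ^ k) ^ τ) := by ring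
          rw [e0, key k]
          -- now expand (S*u)^γ, S^τ, (3r)^m in terms of powers of r
          have e3 : (S * u) ^ γ = (3 * u) ^ γ * r ^ γ := by
            rw [hS, (by ring : 3 * r * u = 3 * u * r),
              Real.mul_rpow (by norm_num) hr.le]
          have e4 : S ^ τ = 3 ^ τ * r ^ τ := by
            rw [hS, Real.mul_rpow (by norm_num) hr.le]
          have e5 : (3 * r : ℝ) ^ m = 3 ^ m * r ^ m := by
            rw [Real.mul_rpow (by norm_num) hr.le]
          rw [e3, e4, e5, hc0]
          have e6 : r ^ m * (r ^ γ * r ^ τ) = r ^ (γ + (n:ℝ)) := by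
            rw [← Real.rpow_add hr, ← Real.rpow_add hr]
            congr 1
            simp only [hτ]; ring
          linear_combination (A * 3 ^ m * ((3 * u) ^ γ * 3 ^ τ) * q ^ k) * e6
  -- zero contribution from Z
  have hZ0 : ∫⁻ y in Z, ENNReal.ofReal (infDist y F ^ γ) = 0 := by
    have : ∀ y ∈ Z, ENNReal.ofReal (infDist y F ^ γ) ≤ 0 := by
      rintro y ⟨_, hy⟩
      have h0 : infDist y F = 0 := le_antisymm hy infDist_nonneg
      rw [h0, Real.zero_rpow hγ0.ne]
      simp
    have h := setLIntegral_mono (μ := volume) (s := Z)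
      (f := fun y => ENNReal.ofReal (infDist y F ^ γ)) (g := fun _ => 0)
      measurable_const this
    have h2 : ∫⁻ y in Z, ENNReal.ofReal (infDist y F ^ γ) ≤ 0 := by simpa using h
    exact le_antisymm h2 zero_le
  -- assemble
  calc ∫⁻ y in ball x r, ENNReal.ofReal (infDist y F ^ γ)
      ≤ ∫⁻ y in Z ∪ ⋃ k : ℕ, L k, ENNReal.ofReal (infDist y F ^ γ) :=
        lintegral_mono_set hcover
    _ ≤ (∫⁻ y in Z, ENNReal.ofReal (infDist y F ^ γ)) +
        ∫⁻ y in ⋃ k : ℕ, L k, ENNReal.ofReal (infDist y F ^ γ) := by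
        rw [← lintegral_add_measure]
        exact lintegral_mono' (Measure.restrict_union_le _ _) le_rfl
    _ = ∫⁻ y in ⋃ k : ℕ, L k, ENNReal.ofReal (infDist y F ^ γ) := by rw [hZ0, zero_add]
    _ ≤ ∑' k : ℕ, ∫⁻ y in L k, ENNReal.ofReal (infDist y F ^ γ) :=
        lintegral_iUnion_le _ _
    _ ≤ ∑' k : ℕ, ENNReal.ofReal (c0 * r ^ (γ + (n:ℝ)) * q ^ k) :=
        ENNReal.tsum_le_tsum hlayer
    _ = ENNReal.ofReal (c0 * r ^ (γ + (n:ℝ))) * ∑' k : ℕ, (ENNReal.ofReal q) ^ k := by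
        rw [← ENNReal.tsum_mul_left]
        congr 1
        funext k
        rw [← ENNReal.ofReal_pow hq0.le,
          ← ENNReal.ofReal_mul (by positivity)]
    _ = ENNReal.ofReal (c0 * r ^ (γ + (n:ℝ))) * (1 - ENNReal.ofReal q)⁻¹ := by
        rw [ENNReal.tsum_geometric]
    _ ≤ ENNReal.ofReal (c0 * (1 - q)⁻¹ * r ^ (γ + (n:ℝ))) := by
        have e7 : (1 : ℝ≥0∞) - ENNReal.ofReal q = ENNReal.ofReal (1 - q) := by
          rw [ENNReal.ofReal_sub 1 hq0.le, ENNReal.ofReal_one]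
        rw [e7, ← ENNReal.ofReal_inv_of_pos (by linarith),
          ← ENNReal.ofReal_mul (by positivity)]
        apply ENNReal.ofReal_le_ofReal
        apply le_of_eq; ring

lemma avg_bound {m : ℝ} {F : Set E} (hn : n ≠ 0) {γ : ℝ}
    (hγl : -((n:ℝ) - m) < γ) {A : ℝ} (hA : 0 ≤ A)
    (hvol : ∀ (x : E) (r t : ℝ), 0 < t → t ≤ r →
      volume (ball x r ∩ {y | infDist y F ≤ t}) ≤
        ENNReal.ofReal (A * (r ^ m * t ^ ((n:ℝ) - m)))) :
    ∃ K : ℝ, 0 ≤ K ∧ ∀ (x : E) (r : ℝ), 0 < r →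
      (volume (ball x r)).toReal⁻¹ * (∫ y in ball x r, infDist y F ^ γ) ≤
        K * (r + infDist x F) ^ γ := by
  classical
  haveI : Nonempty (Fin n) := ⟨⟨0, Nat.pos_of_ne_zero hn⟩⟩
  haveI : Nontrivial (EuclideanSpace ℝ (Fin n)) := inferInstance
  set v' : ℝ := (volume (ball (0:E) 1)).toReal with hv'
  have hv'pos : 0 < v' :=
    ENNReal.toReal_pos (measure_ball_pos volume 0 one_pos).ne' measure_ball_lt_top.ne
  have hmeas := measurable_infDist_rpow F γ
  have hnn : ∀ y : E, 0 ≤ infDist y F ^ γ := fun y => Real.rpow_nonneg infDist_nonneg γ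
  have hvolR : ∀ (x : E) (r : ℝ), 0 < r →
      (volume (ball x r)).toReal = r ^ (n:ℕ) * v' := by
    intro x r hr
    rw [Measure.addHaar_ball volume x hr.le, finrank_euclideanSpace_fin,
      ENNReal.toReal_mul, ENNReal.toReal_ofReal (by positivity)]
  have hint : ∀ (x : E) (r : ℝ),
      (∫ y in ball x r, infDist y F ^ γ) =
        (∫⁻ y in ball x r, ENNReal.ofReal (infDist y F ^ γ)).toReal := by
    intro x r
    exact integral_eq_lintegral_of_nonneg_ae (Filter.Eventually.of_forall hnn)
      hmeas.aestronglyMeasurable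
  -- generic step
  have main : ∀ (x : E) (r : ℝ), 0 < r → ∀ c : ℝ, 0 ≤ c →
      (∫⁻ y in ball x r, ENNReal.ofReal (infDist y F ^ γ)) ≤
        ENNReal.ofReal (c * (r ^ (n:ℕ) * v')) →
      (volume (ball x r)).toReal⁻¹ * (∫ y in ball x r, infDist y F ^ γ) ≤ c := by
    intro x r hr c hc hle
    rw [hint, hvolR x r hr]
    have h1 : (∫⁻ y in ball x r, ENNReal.ofReal (infDist y F ^ γ)).toReal ≤
        c * (r ^ (n:ℕ) * v') :=
      ENNReal.toReal_le_of_le_ofReal (by positivity) hle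
    have hrn : (0:ℝ) < r ^ (n:ℕ) := by positivity
    rw [inv_mul_le_iff₀ (by positivity)]
    calc (∫⁻ y in ball x r, ENNReal.ofReal (infDist y F ^ γ)).toReal
        ≤ c * (r ^ (n:ℕ) * v') := h1
      _ = r ^ (n:ℕ) * v' * c := by ring

  -- constant pointwise bound step
  have constbd : ∀ (x : E) (r : ℝ), 0 < r → ∀ c : ℝ, 0 ≤ c →
      (∀ y ∈ ball x r, infDist y F ^ γ ≤ c) →
      (∫⁻ y in ball x r, ENNReal.ofReal (infDist y F ^ γ)) ≤
        ENNReal.ofReal (c * (r ^ (n:ℕ) * v')) := by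
    intro x r hr c hc hptw
    calc (∫⁻ y in ball x r, ENNReal.ofReal (infDist y F ^ γ))
        ≤ ∫⁻ _ in ball x r, ENNReal.ofReal c :=
          setLIntegral_mono measurable_const
            (fun y hy => ENNReal.ofReal_le_ofReal (hptw y hy))
      _ = ENNReal.ofReal c * volume (ball x r) := setLIntegral_const _ _
      _ = ENNReal.ofReal (c * (r ^ (n:ℕ) * v')) := by
          rw [Measure.addHaar_ball volume x hr.le, finrank_euclideanSpace_fin,
            ← ENNReal.ofReal_toReal (measure_ball_lt_top (x := (0:E)) (r := (1:ℝ))).ne,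
            ← hv', ← ENNReal.ofReal_mul (by positivity : (0:ℝ) ≤ (r:ℝ) ^ (n:ℕ)),
            ← ENNReal.ofReal_mul hc]
  rcases le_or_gt 0 γ with hγ0 | hγ0
  · -- nonnegative exponent : trivial bound
    refine ⟨1, zero_le_one, fun x r hr => ?_⟩
    rw [one_mul]
    have hc0 : (0:ℝ) ≤ r + infDist x F := by
      have := infDist_nonneg (x := x) (s := F); linarith
    refine main x r hr _ (Real.rpow_nonneg hc0 γ) (constbd x r hr _
      (Real.rpow_nonneg hc0 γ) fun y hy => ?_)
    have h1 : infDist y F ≤ infDist x F + dist y x := infDist_le_infDist_add_dist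
    have h2 : dist y x < r := mem_ball.1 hy
    exact Real.rpow_le_rpow infDist_nonneg (by linarith) hγ0
  · -- negative exponent
    obtain ⟨B, hB, hlay⟩ := layered_bound hγ0 hγl hA hvol
    refine ⟨B * v'⁻¹ * (3:ℝ) ^ (-γ) + (4:ℝ) ^ (-γ), by positivity, fun x r hr => ?_⟩
    set dx := infDist x F with hdx
    have hdx0 : 0 ≤ dx := infDist_nonneg
    have hrdx : 0 < r + dx := by linarith
    have hrdxγ : (0:ℝ) ≤ (r + dx) ^ γ := Real.rpow_nonneg hrdx.le γ
    rcases lt_or_ge dx (2 * r) with hnear | hfar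
    · -- near the boundary
      have h1 := hlay x r hr hnear
      have h2 : B * r ^ (γ + (n:ℝ)) ≤
          B * v'⁻¹ * (3:ℝ) ^ (-γ) * (r + dx) ^ γ * (r ^ (n:ℕ) * v') := by
        have e1 : r ^ (γ + (n:ℝ)) = r ^ γ * r ^ (n:ℕ) := by
          rw [Real.rpow_add hr, Real.rpow_natCast]
        have e2 : r ^ γ ≤ (3:ℝ) ^ (-γ) * (r + dx) ^ γ := by
          have h3 : (3 * r) ^ γ ≤ (r + dx) ^ γ :=
            Real.rpow_le_rpow_of_nonpos hrdx (by linarith) hγ0.le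
          have e3 : r ^ γ = (3:ℝ) ^ (-γ) * (3 * r) ^ γ := by
            rw [Real.mul_rpow (by norm_num) hr.le, Real.rpow_neg (by norm_num : (0:ℝ) ≤ 3)]
            have h30 : ((3:ℝ) ^ γ) ≠ 0 := (Real.rpow_pos_of_pos (by norm_num) γ).ne'
            field_simp
          rw [e3]
          exact mul_le_mul_of_nonneg_left h3 (Real.rpow_nonneg (by norm_num) _)
        have hrn : (0:ℝ) < r ^ (n:ℕ) := by positivity
        calc B * r ^ (γ + (n:ℝ)) = B * (r ^ γ * r ^ (n:ℕ)) := by rw [e1]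
          _ ≤ B * ((3:ℝ) ^ (-γ) * (r + dx) ^ γ * r ^ (n:ℕ)) := by
              refine mul_le_mul_of_nonneg_left ?_ hB
              exact mul_le_mul_of_nonneg_right e2 hrn.le
          _ = B * v'⁻¹ * (3:ℝ) ^ (-γ) * (r + dx) ^ γ * (r ^ (n:ℕ) * v') := by
              field_simp
      have h4 := main x r hr (B * v'⁻¹ * (3:ℝ) ^ (-γ) * (r + dx) ^ γ)
        (by positivity) (h1.trans (ENNReal.ofReal_le_ofReal h2))
      calc (volume (ball x r)).toReal⁻¹ * (∫ y in ball x r, infDist y F ^ γ)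
          ≤ B * v'⁻¹ * (3:ℝ) ^ (-γ) * (r + dx) ^ γ := h4
        _ ≤ (B * v'⁻¹ * (3:ℝ) ^ (-γ) + (4:ℝ) ^ (-γ)) * (r + dx) ^ γ := by
            have : (0:ℝ) ≤ (4:ℝ) ^ (-γ) := Real.rpow_nonneg (by norm_num) _
            nlinarith [hrdxγ]
    · -- far from the boundary
      have hdxpos : 0 < dx := by linarith
      have hhalf : 0 < dx / 2 := by linarith
      have hptw : ∀ y ∈ ball x r, infDist y F ^ γ ≤ (dx / 2) ^ γ := by
        intro y hy
        have h1 : infDist x F ≤ infDist y F + dist x y := infDist_le_infDist_add_dist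
        have h2 : dist x y < r := by rw [dist_comm]; exact mem_ball.1 hy
        have h3 : dx / 2 ≤ infDist y F := by
          simp only [hdx] at *; linarith
        exact Real.rpow_le_rpow_of_nonpos hhalf h3 hγ0.le
      have h4 := main x r hr ((dx / 2) ^ γ) (Real.rpow_nonneg hhalf.le γ)
        (constbd x r hr _ (Real.rpow_nonneg hhalf.le γ) hptw)
      have h5 : (dx / 2) ^ γ ≤ (4:ℝ) ^ (-γ) * (r + dx) ^ γ := by
        have e1 : (dx / 2) ^ γ = (2:ℝ) ^ (-γ) * dx ^ γ := by
          rw [div_eq_mul_inv, mul_comm, Real.mul_rpow (by norm_num) hdxpos.le,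
            Real.inv_rpow (by norm_num : (0:ℝ) ≤ 2), ← Real.rpow_neg (by norm_num : (0:ℝ) ≤ 2)]
        have e2 : dx ^ γ ≤ (2:ℝ) ^ (-γ) * (r + dx) ^ γ := by
          have h6 : (2 * dx) ^ γ ≤ (r + dx) ^ γ :=
            Real.rpow_le_rpow_of_nonpos hrdx (by linarith) hγ0.le
          have e3 : dx ^ γ = (2:ℝ) ^ (-γ) * (2 * dx) ^ γ := by
            rw [Real.mul_rpow (by norm_num) hdxpos.le,
              Real.rpow_neg (by norm_num : (0:ℝ) ≤ 2)]
            have h20 : ((2:ℝ) ^ γ) ≠ 0 := (Real.rpow_pos_of_pos (by norm_num) γ).ne'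
            field_simp
          rw [e3]
          exact mul_le_mul_of_nonneg_left h6 (Real.rpow_nonneg (by norm_num) _)
        have e4 : (2:ℝ) ^ (-γ) * (2:ℝ) ^ (-γ) = (4:ℝ) ^ (-γ) := by
          rw [show (4:ℝ) = 2 * 2 by norm_num,
            Real.mul_rpow (by norm_num) (by norm_num)]
        have h2γ : (0:ℝ) ≤ (2:ℝ) ^ (-γ) := Real.rpow_nonneg (by norm_num) _
        calc (dx / 2) ^ γ = (2:ℝ) ^ (-γ) * dx ^ γ := e1
          _ ≤ (2:ℝ) ^ (-γ) * ((2:ℝ) ^ (-γ) * (r + dx) ^ γ) :=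
              mul_le_mul_of_nonneg_left e2 h2γ
          _ = (4:ℝ) ^ (-γ) * (r + dx) ^ γ := by rw [← mul_assoc, e4]
      calc (volume (ball x r)).toReal⁻¹ * (∫ y in ball x r, infDist y F ^ γ)
          ≤ (dx / 2) ^ γ := h4
        _ ≤ (4:ℝ) ^ (-γ) * (r + dx) ^ γ := h5
        _ ≤ (B * v'⁻¹ * (3:ℝ) ^ (-γ) + (4:ℝ) ^ (-γ)) * (r + dx) ^ γ := by
            have h7 : (0:ℝ) ≤ B * v'⁻¹ * (3:ℝ) ^ (-γ) := by positivity
            nlinarith [hrdxγ]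

end DistAp

/-- If `Ω ⊂ ℝⁿ` is a bounded domain whose boundary is an m-set, `0 < m ≤ n`, and
`−(n−m) < μ < (n−m)(p−1)` with `1 < p < ∞`, then the weight `d(x)^μ`, with
`d = dist(·, ∂Ω)`, belongs to the Muckenhaupt class `A_p`: the `A_p` quotient over
all balls is uniformly bounded. -/
theorem dist_rpow_muckenhaupt {n : ℕ} (m C μ p : ℝ) (hm : 0 < m) (hmn : m ≤ n)
    (Ω : Set (EuclideanSpace ℝ (Fin n))) (hΩo : IsOpen Ω) (hΩne : Ω.Nonempty)
    (hΩb : Bornology.IsBounded Ω) (hΩc : IsConnected Ω)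
    (hF : IsMSet m C (frontier Ω)) (hp : 1 < p)
    (hμl : -(n - m) < μ) (hμr : μ < (n - m) * (p - 1)) :
    ∃ K : ℝ, ∀ (x : EuclideanSpace ℝ (Fin n)) (r : ℝ), 0 < r →
      (((volume (Metric.ball x r)).toReal)⁻¹ *
          ∫ y in Metric.ball x r, Metric.infDist y (frontier Ω) ^ μ) *
        (((volume (Metric.ball x r)).toReal)⁻¹ *
          ∫ y in Metric.ball x r, Metric.infDist y (frontier Ω) ^ (-(μ / (p - 1))))
            ^ (p - 1)
        ≤ K := by
  classical
  have hp1 : 0 < p - 1 := by linarith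
  -- m < n, else the hypotheses on μ are contradictory
  have hτpos : 0 < (n:ℝ) - m := by
    rcases eq_or_lt_of_le hmn with he | hlt
    · exfalso
      have h0 : (n:ℝ) - m = 0 := by rw [← he]; ring
      rw [h0] at hμl hμr
      simp at hμl hμr
      nlinarith
    · linarith
  have hnpos : (0:ℝ) < (n:ℝ) := by linarith
  have hn : n ≠ 0 := by
    intro h; rw [h] at hnpos; norm_num at hnpos
  haveI : Nonempty (Fin n) := ⟨⟨0, Nat.pos_of_ne_zero hn⟩⟩
  -- the boundary is nonempty and compact
  have hFne : (frontier Ω).Nonempty := by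
    rcases Set.eq_empty_or_nonempty (frontier Ω) with he | h
    · exfalso
      have hclopen : IsClopen Ω := isClopen_iff_frontier_eq_empty.mpr he
      rcases isClopen_iff.1 hclopen with h1 | h1
      · exact hΩne.ne_empty h1
      · rw [h1] at hΩb
        exact NormedSpace.unbounded_univ ℝ (EuclideanSpace ℝ (Fin n)) hΩb
    · exact h
  have hFc : IsCompact (frontier Ω) :=
    isCompact_of_isClosed_isBounded isClosed_frontier
      (hΩb.closure.subset frontier_subset_closure)
  obtain ⟨A, hA, hvol⟩ := DistAp.vol_thickening hm hFc hFne hF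
  set β : ℝ := -(μ / (p - 1)) with hβ
  have hβl : -((n:ℝ) - m) < β := by
    have h1 : μ / (p - 1) < (n:ℝ) - m := (div_lt_iff₀ hp1).2 (by linarith)
    simp only [hβ]; linarith
  obtain ⟨K₁, hK₁, havg₁⟩ := DistAp.avg_bound (F := frontier Ω) hn hμl hA hvol
  obtain ⟨K₂, hK₂, havg₂⟩ := DistAp.avg_bound (F := frontier Ω) hn hβl hA hvol
  refine ⟨K₁ * K₂ ^ (p - 1), fun x r hr => ?_⟩
  set dx := Metric.infDist x (frontier Ω) with hdx
  have hdx0 : 0 ≤ dx := Metric.infDist_nonneg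
  have hρ : 0 < r + dx := by linarith
  have h₁ := havg₁ x r hr
  have h₂ := havg₂ x r hr
  have ha₂nn : 0 ≤ (volume (Metric.ball x r)).toReal⁻¹ *
      ∫ y in Metric.ball x r, Metric.infDist y (frontier Ω) ^ β := by
    refine mul_nonneg (by positivity) (integral_nonneg fun y => ?_)
    exact Real.rpow_nonneg Metric.infDist_nonneg β
  have ha₁nn : 0 ≤ (volume (Metric.ball x r)).toReal⁻¹ *
      ∫ y in Metric.ball x r, Metric.infDist y (frontier Ω) ^ μ := by
    refine mul_nonneg (by positivity) (integral_nonneg fun y => ?_)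
    exact Real.rpow_nonneg Metric.infDist_nonneg μ
  have step : ((volume (Metric.ball x r)).toReal⁻¹ *
          ∫ y in Metric.ball x r, Metric.infDist y (frontier Ω) ^ μ) *
        ((volume (Metric.ball x r)).toReal⁻¹ *
          ∫ y in Metric.ball x r, Metric.infDist y (frontier Ω) ^ β) ^ (p - 1)
      ≤ (K₁ * (r + dx) ^ μ) * (K₂ * (r + dx) ^ β) ^ (p - 1) := by
    refine mul_le_mul h₁ (Real.rpow_le_rpow ha₂nn h₂ hp1.le)
      (Real.rpow_nonneg ha₂nn _) (mul_nonneg hK₁ (Real.rpow_nonneg hρ.le _))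
  refine step.trans (le_of_eq ?_)
  have e1 : (K₂ * (r + dx) ^ β) ^ (p - 1) = K₂ ^ (p - 1) * (r + dx) ^ (β * (p - 1)) := by
    rw [Real.mul_rpow hK₂ (Real.rpow_nonneg hρ.le β), ← Real.rpow_mul hρ.le]
  have e2 : β * (p - 1) = -μ := by
    simp only [hβ]; field_simp
  have e3 : (r + dx) ^ μ * (r + dx) ^ (-μ) = 1 := by
    rw [← Real.rpow_add hρ]; simp
  rw [e1, e2]
  calc K₁ * (r + dx) ^ μ * (K₂ ^ (p - 1) * (r + dx) ^ (-μ))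
      = K₁ * K₂ ^ (p - 1) * ((r + dx) ^ μ * (r + dx) ^ (-μ)) := by ring
    _ = K₁ * K₂ ^ (p - 1) := by rw [e3, mul_one]
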